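/- Let μ be an invariant probability measure for a system with decay of correlations: there are C > 0 and β > 0 such that for every set A of the form Q (a finite union of at most 2 intervals, with indicator of bounded variation ≤ 5), |μ(Q ∩ f^{-j}(Q)) − μ(Q)²| ≤ C' μ(Q) e^{-βj}. Suppose in addition that there exist B > 0 such that μ(Q ∩ f^{-j}(Q)) = 0 for all 1 ≤ j < B log n, and that n·μ(Q_n) → λ ≥ 0 for a sequence of sets Q_n, with Bβ > 1. Then for any sequence k_n → ∞ with k_n = o(n), n ∑_{j=1}^{[n/k_n]} μ(Q_n ∩ f^{-j}(Q_n)) → 0 as n → ∞. -/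

import Mathlib

open MeasureTheory Finset Filter

/-- Quantitative short-returns estimate: if `(Q_n)` satisfies `n·μ(Q_n) → λ ≥ 0`, there
are no returns before time `B log n`, and `μ(Q_n ∩ f^{-j}(Q_n)) ≤ μ(Q_n)² + C'μ(Q_n)e^{-βj}`
with `Bβ > 1`, then for any `k_n → ∞` with `k_n = o(n)`,
`n ∑_{j=1}^{[n/k_n]} μ(Q_n ∩ f^{-j}(Q_n)) → 0`. -/
theorem stmt13 {X : Type*} [MeasurableSpace X] (μ : Measure X) [IsProbabilityMeasure μ]
    (f : X → X) (hf : Measurable f) (Q : ℕ → Set X) (hQ : ∀ n, MeasurableSet (Q n))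
    (lam : ℝ) (hlam : 0 ≤ lam)
    (hμQ : Tendsto (fun (n : ℕ) => (n : ℝ) * (μ (Q n)).toReal) atTop (nhds lam))
    (C' β B : ℝ) (hC' : 0 < C') (hβ : 0 < β) (hB : 0 < B) (hBβ : 1 < B * β)
    (hshort : ∀ (n : ℕ) (j : ℕ), 1 ≤ j → (j : ℝ) < B * Real.log n →
      μ (Q n ∩ f^[j] ⁻¹' (Q n)) = 0)
    (hdecay : ∀ (n : ℕ) (j : ℕ),
      (μ (Q n ∩ f^[j] ⁻¹' (Q n))).toReal ≤
        (μ (Q n)).toReal ^ 2 + C' * (μ (Q n)).toReal * Real.exp (-β * j))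
    (k : ℕ → ℕ) (hk : Tendsto k atTop atTop)
    (hko : Tendsto (fun (n : ℕ) => (k n : ℝ) / n) atTop (nhds 0)) :
    Tendsto (fun (n : ℕ) => (n : ℝ) *
        ∑ j ∈ Finset.Icc 1 (n / k n), (μ (Q n ∩ f^[j] ⁻¹' (Q n))).toReal)
      atTop (nhds 0) := by
  have hm0 : ∀ n, 0 ≤ (μ (Q n)).toReal := fun n => ENNReal.toReal_nonneg
  set u : ℕ → ℝ := fun n : ℕ => ((n : ℝ) * (μ (Q n)).toReal) ^ 2 / (k n : ℝ) +
      C' * ((n : ℝ) * (μ (Q n)).toReal) * Real.exp ((1 - B * β) * Real.log n) with hu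
  have hkR : Tendsto (fun n : ℕ => (k n : ℝ)) atTop atTop :=
    tendsto_natCast_atTop_atTop.comp hk
  have h1 : Tendsto (fun n : ℕ => ((n : ℝ) * (μ (Q n)).toReal) ^ 2 / (k n : ℝ))
      atTop (nhds 0) := by
    have := (hμQ.pow 2).mul hkR.inv_tendsto_atTop
    simpa [div_eq_mul_inv] using this
  have hlog : Tendsto (fun n : ℕ => Real.log n) atTop atTop :=
    Real.tendsto_log_atTop.comp tendsto_natCast_atTop_atTop
  have hexp : Tendsto (fun n : ℕ => Real.exp ((1 - B * β) * Real.log n)) atTop (nhds 0) := by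
    apply Real.tendsto_exp_atBot.comp
    have h : Tendsto (fun n : ℕ => (B * β - 1) * Real.log n) atTop atTop :=
      hlog.const_mul_atTop (by linarith)
    have h2 := tendsto_neg_atBot_iff.2 h
    exact h2.congr fun n => by ring
  have h2 : Tendsto (fun n : ℕ => C' * ((n : ℝ) * (μ (Q n)).toReal) *
      Real.exp ((1 - B * β) * Real.log n)) atTop (nhds 0) := by
    have := (hμQ.const_mul C').mul hexp
    simpa using this
  have hu0 : Tendsto u atTop (nhds 0) := by simpa using h1.add h2
  apply tendsto_of_tendsto_of_tendsto_of_le_of_le' tendsto_const_nhds hu0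
  · filter_upwards with n
    exact mul_nonneg (Nat.cast_nonneg n)
      (Finset.sum_nonneg fun j _ => ENNReal.toReal_nonneg)
  · filter_upwards [eventually_ge_atTop 1, hk.eventually_ge_atTop 1] with n hn hkn
    have hn0 : (0 : ℝ) < n := by exact_mod_cast hn
    have hkn1 : (1 : ℝ) ≤ k n := by exact_mod_cast hkn
    have hkn0 : (0 : ℝ) < k n := by linarith
    set E : ℝ := Real.exp (-(B * β) * Real.log n) with hE
    have hEpos : (0 : ℝ) < E := Real.exp_pos _
    have hterm : ∀ j ∈ Finset.Icc 1 (n / k n),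
        (μ (Q n ∩ f^[j] ⁻¹' (Q n))).toReal ≤
          (μ (Q n)).toReal ^ 2 + C' * (μ (Q n)).toReal * E := by
      intro j hj
      rw [Finset.mem_Icc] at hj
      by_cases hjc : (j : ℝ) < B * Real.log n
      · rw [hshort n j hj.1 hjc]
        have := hm0 n
        positivity
      · refine (hdecay n j).trans ?_
        have hle : Real.exp (-β * j) ≤ E := by
          apply Real.exp_le_exp.2
          push_neg at hjc
          nlinarith
        have := mul_le_mul_of_nonneg_left hle (mul_nonneg hC'.le (hm0 n))
        nlinarith
    have hsum : ∑ j ∈ Finset.Icc 1 (n / k n), (μ (Q n ∩ f^[j] ⁻¹' (Q n))).toReal ≤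
        ((n / k n : ℕ) : ℝ) * ((μ (Q n)).toReal ^ 2 + C' * (μ (Q n)).toReal * E) := by
      have := Finset.sum_le_card_nsmul (Finset.Icc 1 (n / k n)) _ _ hterm
      simp only [Nat.card_Icc, Nat.add_sub_cancel, nsmul_eq_mul] at this
      exact this
    have hdivle : ((n / k n : ℕ) : ℝ) ≤ (n : ℝ) / (k n : ℝ) := Nat.cast_div_le
    have hbnd0 : (0 : ℝ) ≤ (μ (Q n)).toReal ^ 2 + C' * (μ (Q n)).toReal * E := by
      have := hm0 n; positivity
    have hnE : Real.exp ((1 - B * β) * Real.log n) = (n : ℝ) * E := by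
      have h : (1 - B * β) * Real.log n = Real.log n + -(B * β) * Real.log n := by ring
      rw [hE, h, Real.exp_add, Real.exp_log hn0]
    have hdk : (n : ℝ) / (k n : ℝ) ≤ (n : ℝ) := div_le_self (le_of_lt hn0) hkn1
    calc (n : ℝ) * ∑ j ∈ Finset.Icc 1 (n / k n), (μ (Q n ∩ f^[j] ⁻¹' (Q n))).toReal
        ≤ (n : ℝ) * (((n / k n : ℕ) : ℝ) *
            ((μ (Q n)).toReal ^ 2 + C' * (μ (Q n)).toReal * E)) :=
          mul_le_mul_of_nonneg_left hsum (le_of_lt hn0)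
      _ ≤ (n : ℝ) * (((n : ℝ) / (k n : ℝ)) *
            ((μ (Q n)).toReal ^ 2 + C' * (μ (Q n)).toReal * E)) :=
          mul_le_mul_of_nonneg_left (mul_le_mul_of_nonneg_right hdivle hbnd0)
            (le_of_lt hn0)
      _ ≤ u n := by
          simp only [hu, hnE]
          have key : (n : ℝ) * (((n : ℝ) / (k n : ℝ)) * (C' * (μ (Q n)).toReal * E)) ≤
              C' * ((n : ℝ) * (μ (Q n)).toReal) * ((n : ℝ) * E) := by
            have e1 : (n : ℝ) * (((n : ℝ) / (k n : ℝ)) * (C' * (μ (Q n)).toReal * E)) =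
                ((n : ℝ) / (k n : ℝ)) * ((n : ℝ) * (C' * (μ (Q n)).toReal * E)) := by ring
            have e2 : C' * ((n : ℝ) * (μ (Q n)).toReal) * ((n : ℝ) * E) =
                (n : ℝ) * ((n : ℝ) * (C' * (μ (Q n)).toReal * E)) := by ring
            rw [e1, e2]
            apply mul_le_mul_of_nonneg_right hdk
            have := hm0 n
            positivity
          have heq : (n : ℝ) * (((n : ℝ) / (k n : ℝ)) * ((μ (Q n)).toReal ^ 2)) =
              ((n : ℝ) * (μ (Q n)).toReal) ^ 2 / (k n : ℝ) := by ring
          have hsplit : (n : ℝ) * (((n : ℝ) / (k n : ℝ)) *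
              ((μ (Q n)).toReal ^ 2 + C' * (μ (Q n)).toReal * E)) =
              (n : ℝ) * (((n : ℝ) / (k n : ℝ)) * ((μ (Q n)).toReal ^ 2)) +
              (n : ℝ) * (((n : ℝ) / (k n : ℝ)) * (C' * (μ (Q n)).toReal * E)) := by ring
          rw [hsplit, heq]
          exact add_le_add le_rfl key
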